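/- Let A, B, D be linear maps on ℂⁿ ⊗ ℂⁿ with A invertible, satisfying A₁₂ B₁₃ D₂₃ = D₂₃ B₁₃ A₁₂ on ℂⁿ ⊗ ℂⁿ ⊗ ℂⁿ, and let C be the cyclic shift on (ℂⁿ)^{⊗N}. Then the operator T := C⁻¹ ∘ t(B) commutes with t(D), and consequently every power T^L (L ≥ 1) commutes with t(D). (This expresses that the trace of the T-operators gives an infinite set of quantities conserved by the evolution operator of an integrable quantum spin chain.) -/

import Mathlib

/-!
STATEMENT 8: If A, B, D are linear maps on ℂⁿ ⊗ ℂⁿ with A invertible satisfying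
A₁₂ B₁₃ D₂₃ = D₂₃ B₁₃ A₁₂, and C is the cyclic shift on (ℂⁿ)^{⊗N}, then
T := C⁻¹ ∘ t(B) commutes with t(D), and consequently every power T^L (L ≥ 1)
commutes with t(D).

Operators are represented by their matrices in the standard product bases
(output index first, so matrix multiplication is composition).
-/

open Complex Matrix

/-- `X ⊗ id` acting on the first two factors of ℂⁿ ⊗ ℂⁿ ⊗ ℂⁿ. -/
noncomputable def leg12 {n : ℕ} (R : Matrix (Fin n × Fin n) (Fin n × Fin n) ℂ) :
    Matrix (Fin n × Fin n × Fin n) (Fin n × Fin n × Fin n) ℂ :=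
  fun p q => R (p.1, p.2.1) (q.1, q.2.1) * (if p.2.2 = q.2.2 then 1 else 0)

/-- `id ⊗ X` acting on the last two factors of ℂⁿ ⊗ ℂⁿ ⊗ ℂⁿ. -/
noncomputable def leg23 {n : ℕ} (R : Matrix (Fin n × Fin n) (Fin n × Fin n) ℂ) :
    Matrix (Fin n × Fin n × Fin n) (Fin n × Fin n × Fin n) ℂ :=
  fun p q => (if p.1 = q.1 then 1 else 0) * R (p.2.1, p.2.2) (q.2.1, q.2.2)

/-- `X` acting on the first and third factors of ℂⁿ ⊗ ℂⁿ ⊗ ℂⁿ. -/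
noncomputable def leg13 {n : ℕ} (R : Matrix (Fin n × Fin n) (Fin n × Fin n) ℂ) :
    Matrix (Fin n × Fin n × Fin n) (Fin n × Fin n × Fin n) ℂ :=
  fun p q => R (p.1, p.2.2) (q.1, q.2.2) * (if p.2.1 = q.2.1 then 1 else 0)

/-- The transfer matrix `t(R)` on (ℂⁿ)^{⊗N}, with entries
`t_{i₁⋯i_N}^{j₁⋯j_N} = Σ_b ∏_k R_{(b_k, i_k)}^{(b_{k+1}, j_k)}` (indices mod N);
here `R (b,j) (a,i) = R_{(a,i)}^{(b,j)}` (output index first). -/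
noncomputable def transfer {n : ℕ} (N : ℕ) [NeZero N]
    (R : Matrix (Fin n × Fin n) (Fin n × Fin n) ℂ) :
    Matrix (ZMod N → Fin n) (ZMod N → Fin n) ℂ :=
  fun j i => ∑ b : ZMod N → Fin n, ∏ k : ZMod N, R (b (k + 1), j k) (b k, i k)

/-- The cyclic shift operator `C(e_{j₁} ⊗ ⋯ ⊗ e_{j_N}) = e_{j₂} ⊗ ⋯ ⊗ e_{j_N} ⊗ e_{j₁}`. -/
noncomputable def cyc {n : ℕ} (N : ℕ) [NeZero N] :
    Matrix (ZMod N → Fin n) (ZMod N → Fin n) ℂ :=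
  fun g j => if g = (fun k => j (k + 1)) then 1 else 0

/- ==================== auxiliary machinery ==================== -/

section CycS

variable {α : Type*} [Fintype α] [DecidableEq α]

/-- The cyclic contraction of a `ZMod N`-indexed family of matrices. -/
noncomputable def cycS (N : ℕ) [NeZero N] (F : ZMod N → Matrix α α ℂ) : ℂ :=
  ∑ b : ZMod N → α, ∏ k : ZMod N, F k (b (k + 1)) (b k)

/-- Shift equivalence on functions `ZMod N → α`. -/
def shiftFun (N : ℕ) [NeZero N] (α : Type*) (c : ZMod N) : (ZMod N → α) ≃ (ZMod N → α) where
  toFun b k := b (k + c)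
  invFun b k := b (k - c)
  left_inv b := by funext k; simp
  right_inv b := by funext k; simp

omit [DecidableEq α] in
lemma cycS_shift (N : ℕ) [NeZero N] (F : ZMod N → Matrix α α ℂ) :
    cycS N (fun k => F (k + 1)) = cycS N F := by
  unfold cycS
  refine Fintype.sum_equiv (shiftFun N α (-1)) _ _ (fun b => ?_)
  refine Fintype.prod_equiv (Equiv.addRight (1 : ZMod N)) _ _ (fun k => ?_)
  simp [shiftFun]

lemma cycS_slide (N : ℕ) [NeZero N] (M : Matrix α α ℂ) (F : ZMod N → Matrix α α ℂ) :
    cycS N (fun k => M * F k) = cycS N (fun k => F (k + 1) * M) := by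
  unfold cycS
  simp only [Matrix.mul_apply]
  have expand : ∀ (G H : ZMod N → Matrix α α ℂ) (b : ZMod N → α),
      (∏ k : ZMod N, ∑ m : α, G k (b (k+1)) m * H k m (b k)) =
      ∑ c : ZMod N → α, ∏ k : ZMod N, (G k (b (k+1)) (c k) * H k (c k) (b k)) := by
    intro G H b
    rw [Finset.prod_univ_sum]
    simp [Fintype.piFinset_univ]
  let e : ((ZMod N → α) × (ZMod N → α)) ≃ ((ZMod N → α) × (ZMod N → α)) :=
    (Equiv.prodComm _ _).trans (Equiv.prodCongr (Equiv.refl _) (shiftFun N α 1))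
  calc (∑ b : ZMod N → α, ∏ k : ZMod N, ∑ m, M (b (k+1)) m * F k m (b k))
      = ∑ b : ZMod N → α, ∑ c : ZMod N → α,
          ∏ k : ZMod N, (M (b (k+1)) (c k) * F k (c k) (b k)) := by
        exact Finset.sum_congr rfl fun b _ => expand (fun _ => M) F b
    _ = ∑ p : (ZMod N → α) × (ZMod N → α),
          ∏ k : ZMod N, (M (p.1 (k+1)) (p.2 k) * F k (p.2 k) (p.1 k)) := by
        rw [Fintype.sum_prod_type]
    _ = ∑ p : (ZMod N → α) × (ZMod N → α),
          ∏ k : ZMod N, (F (k+1) (p.1 (k+1)) (p.2 k) * M (p.2 k) (p.1 k)) := by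
        refine Fintype.sum_equiv e _ _ (fun p => ?_)
        rw [Finset.prod_mul_distrib, Finset.prod_mul_distrib, mul_comm]
        congr 1
        refine Fintype.prod_equiv (Equiv.subRight (1 : ZMod N)) _ _ (fun k => ?_)
        simp [e, shiftFun]
    _ = ∑ b : ZMod N → α, ∑ c : ZMod N → α,
          ∏ k : ZMod N, (F (k+1) (b (k+1)) (c k) * M (c k) (b k)) := by
        rw [Fintype.sum_prod_type]
    _ = ∑ b : ZMod N → α, ∏ k : ZMod N, ∑ m, F (k+1) (b (k+1)) m * M m (b k) := by
        exact Finset.sum_congr rfl fun b _ => (expand (fun k => F (k+1)) (fun _ => M) b).symm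

lemma cycS_conj (N : ℕ) [NeZero N] (M M' : Matrix α α ℂ) (hMM' : M * M' = 1)
    (hM'M : M' * M = 1) (F G : ZMod N → Matrix α α ℂ) (h : ∀ k, M * F k = G k * M) :
    cycS N F = cycS N G := by
  have hF : F = fun k => M' * (G k * M) := by
    funext k
    calc F k = (M' * M) * F k := by rw [hM'M, one_mul]
    _ = M' * (M * F k) := by rw [mul_assoc]
    _ = M' * (G k * M) := by rw [h k]
  calc cycS N F = cycS N (fun k => M' * (G k * M)) := by rw [← hF]
    _ = cycS N (fun k => (G (k+1) * M) * M') := cycS_slide N M' (fun k => G k * M)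
    _ = cycS N (fun k => G (k+1)) := by
        congr 1; funext k; rw [mul_assoc, hMM', mul_one]
    _ = cycS N G := cycS_shift N G

omit [DecidableEq α] in
lemma cycS_relabel {β : Type*} [Fintype β] (N : ℕ) [NeZero N]
    (e : β ≃ α) (F : ZMod N → Matrix α α ℂ) :
    cycS N (fun k => fun p q => F k (e p) (e q)) = cycS N F := by
  unfold cycS
  exact Fintype.sum_equiv (Equiv.piCongrRight (fun _ : ZMod N => e)) _ _ (fun b => rfl)

end CycS

/-- The two-layer local matrix of the product `t(X) * t(Y)` of transfer matrices. -/
noncomputable def slice2 {n : ℕ} (X Y : Matrix (Fin n × Fin n) (Fin n × Fin n) ℂ)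
    (j i : Fin n) : Matrix (Fin n × Fin n) (Fin n × Fin n) ℂ :=
  fun p q => ∑ m : Fin n, X (p.1, j) (q.1, m) * Y (p.2, m) (q.2, i)

/-- The two-layer local matrix of `t(Y) * t(X)`, written on the same index ordering. -/
noncomputable def slice2' {n : ℕ} (X Y : Matrix (Fin n × Fin n) (Fin n × Fin n) ℂ)
    (j i : Fin n) : Matrix (Fin n × Fin n) (Fin n × Fin n) ℂ :=
  fun p q => ∑ m : Fin n, Y (p.2, j) (q.2, m) * X (p.1, m) (q.1, i)

lemma transfer_mul_apply {n : ℕ} (N : ℕ) [NeZero N]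
    (X Y : Matrix (Fin n × Fin n) (Fin n × Fin n) ℂ) (j i : ZMod N → Fin n) :
    (transfer N X * transfer N Y) j i = cycS N (fun k => slice2 X Y (j k) (i k)) := by
  rw [Matrix.mul_apply]
  unfold transfer cycS slice2
  calc (∑ m : ZMod N → Fin n,
        (∑ b : ZMod N → Fin n, ∏ k : ZMod N, X (b (k + 1), j k) (b k, m k)) *
        (∑ d : ZMod N → Fin n, ∏ k : ZMod N, Y (d (k + 1), m k) (d k, i k)))
      = ∑ m : ZMod N → Fin n, ∑ b : ZMod N → Fin n, ∑ d : ZMod N → Fin n,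
          ∏ k : ZMod N, (X (b (k + 1), j k) (b k, m k) * Y (d (k + 1), m k) (d k, i k)) := by
        refine Finset.sum_congr rfl fun m _ => ?_
        rw [Finset.sum_mul_sum]
        exact Finset.sum_congr rfl fun b _ => Finset.sum_congr rfl fun d _ =>
          (Finset.prod_mul_distrib).symm
    _ = ∑ b : ZMod N → Fin n, ∑ d : ZMod N → Fin n, ∑ m : ZMod N → Fin n,
          ∏ k : ZMod N, (X (b (k + 1), j k) (b k, m k) * Y (d (k + 1), m k) (d k, i k)) := by
        rw [Finset.sum_comm]
        exact Finset.sum_congr rfl fun b _ => Finset.sum_comm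
    _ = ∑ b : ZMod N → Fin n, ∑ d : ZMod N → Fin n,
          ∏ k : ZMod N, ∑ m : Fin n, (X (b (k + 1), j k) (b k, m) * Y (d (k + 1), m) (d k, i k)) := by
        refine Finset.sum_congr rfl fun b _ => Finset.sum_congr rfl fun d _ => ?_
        rw [Finset.prod_univ_sum]
        simp [Fintype.piFinset_univ]
    _ = ∑ p : (ZMod N → Fin n) × (ZMod N → Fin n),
          ∏ k : ZMod N, ∑ m : Fin n,
            (X (p.1 (k + 1), j k) (p.1 k, m) * Y (p.2 (k + 1), m) (p.2 k, i k)) := by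
        rw [Fintype.sum_prod_type]
    _ = ∑ c : ZMod N → Fin n × Fin n,
          ∏ k : ZMod N, ∑ m : Fin n,
            X ((c (k + 1)).1, j k) ((c k).1, m) * Y ((c (k + 1)).2, m) ((c k).2, i k) :=
        (Fintype.sum_equiv (Equiv.arrowProdEquivProdArrow (ZMod N) (fun _ => Fin n) (fun _ => Fin n))
          _ _ (fun c => rfl)).symm

/-- Explicit two-sided inverse of the cyclic shift. -/
noncomputable def cycInv {n : ℕ} (N : ℕ) [NeZero N] :
    Matrix (ZMod N → Fin n) (ZMod N → Fin n) ℂ :=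
  fun g j => if g = (fun k => j (k - 1)) then 1 else 0

section collapse
variable {n : ℕ} (N : ℕ) [NeZero N] (X : Matrix (ZMod N → Fin n) (ZMod N → Fin n) ℂ)

lemma cyc_mul_apply (g i : ZMod N → Fin n) :
    (cyc (n := n) N * X) g i = X (fun k => g (k - 1)) i := by
  rw [Matrix.mul_apply]
  rw [Fintype.sum_eq_single (fun k => g (k - 1) : ZMod N → Fin n)
    (fun j hj => by
      unfold cyc
      rw [if_neg, zero_mul]
      intro h
      exact hj (by funext k; rw [h]; simp))]
  unfold cyc
  rw [if_pos (by funext k; simp), one_mul]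

lemma mul_cyc_apply (g i : ZMod N → Fin n) :
    (X * cyc (n := n) N) g i = X g (fun k => i (k + 1)) := by
  rw [Matrix.mul_apply]
  rw [Fintype.sum_eq_single (fun k => i (k + 1) : ZMod N → Fin n)
    (fun j hj => by
      unfold cyc
      rw [if_neg (by intro h; exact hj h), mul_zero])]
  unfold cyc
  rw [if_pos rfl, mul_one]

lemma cycInv_mul_apply (g i : ZMod N → Fin n) :
    (cycInv (n := n) N * X) g i = X (fun k => g (k + 1)) i := by
  rw [Matrix.mul_apply]
  rw [Fintype.sum_eq_single (fun k => g (k + 1) : ZMod N → Fin n)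
    (fun j hj => by
      unfold cycInv
      rw [if_neg, zero_mul]
      intro h
      exact hj (by funext k; rw [h]; simp))]
  unfold cycInv
  rw [if_pos (by funext k; simp), one_mul]

end collapse

lemma cyc_mul_cycInv {n : ℕ} (N : ℕ) [NeZero N] :
    cyc (n := n) N * cycInv N = 1 := by
  ext g h
  rw [cyc_mul_apply]
  unfold cycInv
  rw [Matrix.one_apply]
  congr 1
  rw [eq_iff_iff]
  constructor
  · intro hgh
    funext k
    have := congrFun hgh (k + 1)
    simpa using this
  · intro hgh
    rw [hgh]

lemma cycInv_mul_cyc {n : ℕ} (N : ℕ) [NeZero N] :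
    cycInv (n := n) N * cyc N = 1 := by
  ext g h
  rw [cycInv_mul_apply]
  unfold cyc
  rw [Matrix.one_apply]
  congr 1
  rw [eq_iff_iff]
  constructor
  · intro hgh
    funext k
    have := congrFun hgh (k - 1)
    simpa using this
  · intro hgh
    rw [hgh]

lemma cyc_mul_transfer {n : ℕ} (N : ℕ) [NeZero N]
    (D : Matrix (Fin n × Fin n) (Fin n × Fin n) ℂ) :
    cyc N * transfer N D = transfer N D * cyc N := by
  ext g i
  rw [cyc_mul_apply, mul_cyc_apply]
  unfold transfer
  refine Fintype.sum_equiv (shiftFun N (Fin n) 1) _ _ (fun b => ?_)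
  refine Fintype.prod_equiv (Equiv.subRight (1 : ZMod N)) _ _ (fun k => ?_)
  simp [shiftFun, sub_add_cancel]

lemma intertwine {n : ℕ} (A B D : Matrix (Fin n × Fin n) (Fin n × Fin n) ℂ)
    (hYB : leg12 A * leg13 B * leg23 D = leg23 D * leg13 B * leg12 A) (j i : Fin n) :
    A * slice2 B D j i = slice2' B D j i * A := by
  ext p q
  have h := congrFun (congrFun hYB (p.1, p.2, j)) (q.1, q.2, i)
  simp only [Matrix.mul_apply, leg12, leg13, leg23, slice2, slice2', Fintype.sum_prod_type,
    ite_mul, mul_ite, one_mul, mul_one, zero_mul, mul_zero, Finset.sum_ite_irrel,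
    Finset.sum_const_zero, Finset.sum_ite_eq,
    Finset.sum_ite_eq', Finset.mem_univ, if_true] at h ⊢
  simp only [Finset.sum_ite_irrel, Finset.sum_const_zero, Finset.sum_ite_eq,
    Finset.sum_ite_eq', Finset.mem_univ, if_true, Prod.mk.eta] at h
  refine Eq.trans ?_ h
  simp only [Finset.mul_sum, Finset.sum_mul]
  rw [Finset.sum_comm]
  refine Finset.sum_congr rfl fun b _ => ?_
  rw [Finset.sum_comm]
  exact Finset.sum_congr rfl fun c _ => Finset.sum_congr rfl fun a _ => by ring

set_option maxHeartbeats 1000000 in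
lemma transfer_commute {n : ℕ} (A B D : Matrix (Fin n × Fin n) (Fin n × Fin n) ℂ)
    (hA : IsUnit A)
    (hYB : leg12 A * leg13 B * leg23 D = leg23 D * leg13 B * leg12 A)
    (N : ℕ) [NeZero N] :
    transfer N B * transfer N D = transfer N D * transfer N B := by
  have hd := (Matrix.isUnit_iff_isUnit_det A).1 hA
  have hAA' : A * A⁻¹ = 1 := Matrix.mul_nonsing_inv A hd
  have hA'A : A⁻¹ * A = 1 := Matrix.nonsing_inv_mul A hd
  ext j i
  rw [transfer_mul_apply, transfer_mul_apply]
  have h1 := cycS_conj N A A⁻¹ hAA' hA'A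
      (fun k => slice2 B D (j k) (i k))
      (fun k => slice2' B D (j k) (i k)) (fun k => intertwine A B D hYB (j k) (i k))
  have h2 : cycS N (fun k => slice2' B D (j k) (i k))
      = cycS N (fun k => slice2 D B (j k) (i k)) := by
    have h3 : (fun k : ZMod N => slice2' B D (j k) (i k))
        = fun k => fun p q => slice2 D B (j k) (i k)
            ((Equiv.prodComm (Fin n) (Fin n)) p) ((Equiv.prodComm (Fin n) (Fin n)) q) := rfl
    rw [h3, cycS_relabel]
  rw [h1, h2]

theorem Toperator_powers_commute_with_transfer {n : ℕ}
    (A B D : Matrix (Fin n × Fin n) (Fin n × Fin n) ℂ)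
    (hA : IsUnit A)
    (hYB : leg12 A * leg13 B * leg23 D = leg23 D * leg13 B * leg12 A)
    (N : ℕ) [NeZero N]
    (T : Matrix (ZMod N → Fin n) (ZMod N → Fin n) ℂ)
    (hT : T = (cyc N)⁻¹ * transfer N B) :
    T * transfer N D = transfer N D * T ∧
      ∀ L : ℕ, 1 ≤ L → T ^ L * transfer N D = transfer N D * T ^ L := by
  have hBD := transfer_commute A B D hA hYB N
  have hinv : (cyc (n := n) N)⁻¹ = cycInv N := Matrix.inv_eq_right_inv (cyc_mul_cycInv N)
  have hinvD : cycInv (n := n) N * transfer N D = transfer N D * cycInv N := by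
    calc cycInv (n := n) N * transfer N D
        = cycInv N * transfer N D * (cyc N * cycInv N) := by rw [cyc_mul_cycInv, mul_one]
      _ = cycInv N * (transfer N D * cyc N) * cycInv N := by
          rw [← mul_assoc (cycInv N * transfer N D) (cyc N) (cycInv N),
            mul_assoc (cycInv N) (transfer N D) (cyc N)]
      _ = cycInv N * (cyc N * transfer N D) * cycInv N := by rw [← cyc_mul_transfer]
      _ = (cycInv N * cyc N) * transfer N D * cycInv N := by
          rw [← mul_assoc (cycInv N) (cyc N) (transfer N D)]
      _ = transfer N D * cycInv N := by rw [cycInv_mul_cyc, one_mul]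
  have hTD : T * transfer N D = transfer N D * T := by
    rw [hT, hinv]
    calc cycInv (n := n) N * transfer N B * transfer N D
        = cycInv N * (transfer N B * transfer N D) := by rw [mul_assoc]
      _ = cycInv N * (transfer N D * transfer N B) := by rw [hBD]
      _ = (cycInv N * transfer N D) * transfer N B := by rw [mul_assoc]
      _ = transfer N D * cycInv N * transfer N B := by rw [hinvD]
      _ = transfer N D * (cycInv N * transfer N B) := by rw [mul_assoc]
  have hc : Commute T (transfer N D) := hTD
  exact ⟨hTD, fun L _ => (hc.pow_left L).eq⟩
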